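/- arXiv:2102.01310 — 2 statements merged into one kernel-verified Lean document; each statement's English description precedes it below -/
import Mathlib

section
/- (Lemma on false alarm classes.) Let T be a positive-integer-valued random variable, m a positive integer, and 0 < \alpha < 1. If \sup_{\ell \ge 0} P(T \le \ell + m \mid T > \ell) \le \alpha, then E[T] \ge 3/2 + (m/\alpha)(1 - (3/2)\alpha). -/
open MeasureTheory ENNReal

/-- Layer-cake formula for ℕ-valued functions. -/
lemma lintegral_nat_eq_tsum {Ω : Type*} [MeasurableSpace Ω] (μ : Measure Ω)
    (T : Ω → ℕ) (hT : Measurable T) :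
    ∫⁻ ω, (T ω : ℝ≥0∞) ∂μ = ∑' n : ℕ, μ {ω | n < T ω} := by
  have hmeas : ∀ n : ℕ, MeasurableSet {ω | n < T ω} := fun n =>
    measurableSet_lt measurable_const hT
  have key : ∀ ω, (T ω : ℝ≥0∞) =
      ∑' n : ℕ, Set.indicator {ω | n < T ω} (fun _ => (1 : ℝ≥0∞)) ω := by
    intro ω
    have : ∀ n : ℕ, Set.indicator {ω | n < T ω} (fun _ => (1 : ℝ≥0∞)) ω
        = if n < T ω then 1 else 0 := by
      intro n; by_cases h : n < T ω <;> simp [Set.indicator, h]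
    simp_rw [this]
    rw [tsum_eq_sum (s := Finset.range (T ω)) (by
      intro b hb
      simp only [Finset.mem_range, not_lt] at hb
      simp [Nat.not_lt.mpr hb])]
    have h1 : ∀ n ∈ Finset.range (T ω), (if n < T ω then (1 : ℝ≥0∞) else 0) = 1 :=
      fun n hn => if_pos (Finset.mem_range.mp hn)
    rw [Finset.sum_congr rfl h1, Finset.sum_const, Finset.card_range, nsmul_eq_mul, mul_one]
  calc ∫⁻ ω, (T ω : ℝ≥0∞) ∂μ
      = ∫⁻ ω, ∑' n : ℕ, Set.indicator {ω | n < T ω} (fun _ => (1 : ℝ≥0∞)) ω ∂μ := by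
        exact lintegral_congr key
    _ = ∑' n : ℕ, ∫⁻ ω, Set.indicator {ω | n < T ω} (fun _ => (1 : ℝ≥0∞)) ω ∂μ := by
        exact lintegral_tsum fun n => ((measurable_const).indicator (hmeas n)).aemeasurable
    _ = ∑' n : ℕ, μ {ω | n < T ω} := by
        congr 1; funext n; rw [lintegral_indicator (hmeas n)]; simp

theorem stmt_3 {Ω : Type*} [MeasurableSpace Ω] (μ : Measure Ω) [IsProbabilityMeasure μ]
    (T : Ω → ℕ) (hT : Measurable T) (hTpos : ∀ ω, 1 ≤ T ω) (m : ℕ) (hm : 1 ≤ m)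
    (α : ℝ) (hα0 : 0 < α) (hα1 : α < 1)
    (hfa : ∀ ℓ : ℕ, μ {ω | T ω ≤ ℓ + m ∧ ℓ < T ω} ≤ ENNReal.ofReal α * μ {ω | ℓ < T ω}) :
    ENNReal.ofReal (3 / 2 + (m / α) * (1 - (3 / 2) * α)) ≤ ∫⁻ ω, (T ω : ℝ≥0∞) ∂μ := by
  set a : ℝ≥0∞ := ENNReal.ofReal α with ha
  set p : ℕ → ℝ≥0∞ := fun n => μ {ω | n < T ω} with hp
  have hmeas : ∀ n : ℕ, MeasurableSet {ω | n < T ω} := fun n =>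
    measurableSet_lt measurable_const hT
  have ha1 : a ≤ 1 := ENNReal.ofReal_le_one.mpr hα1.le
  have ha0 : a ≠ 0 := by
    simp [ha, ENNReal.ofReal_eq_zero, not_le, hα0]
  have hatop : a ≠ ⊤ := ENNReal.ofReal_ne_top
  have hpfin : ∀ n, p n ≤ 1 := fun n => prob_le_one
  have hp0 : p 0 = 1 := by
    have : {ω | 0 < T ω} = Set.univ := by
      ext ω; simp [Nat.lt_of_lt_of_le Nat.zero_lt_one (hTpos ω)]
    simp [hp, this]
  have hanti : ∀ i j : ℕ, i ≤ j → p j ≤ p i := by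
    intro i j hij
    exact measure_mono fun ω hω => lt_of_le_of_lt hij hω
  -- key step: (1 - a) * p ℓ ≤ p (ℓ + m)
  have hstep : ∀ ℓ : ℕ, (1 - a) * p ℓ ≤ p (ℓ + m) := by
    intro ℓ
    have hsplit : p ℓ = μ {ω | T ω ≤ ℓ + m ∧ ℓ < T ω} + p (ℓ + m) := by
      simp only [hp]
      have hunion : {ω | ℓ < T ω} = {ω | T ω ≤ ℓ + m ∧ ℓ < T ω} ∪ {ω | ℓ + m < T ω} := by
        ext ω; simp only [Set.mem_setOf_eq, Set.mem_union]; omega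
      rw [hunion, measure_union ?_ (hmeas (ℓ + m))]
      intro s hs1 hs2 ω hω
      have h1 := hs1 hω; have h2 := hs2 hω
      simp only [Set.mem_setOf_eq] at h1 h2
      omega
    have hfa' : μ {ω | T ω ≤ ℓ + m ∧ ℓ < T ω} ≤ a * p ℓ := hfa ℓ
    have hle : p ℓ ≤ a * p ℓ + p (ℓ + m) := by
      conv_lhs => rw [hsplit]
      exact add_le_add_left hfa' _
    have hfin : a * p ℓ ≠ ⊤ := ENNReal.mul_ne_top hatop (ne_top_of_le_ne_top one_ne_top (hpfin ℓ))
    have : (1 - a) * p ℓ + a * p ℓ ≤ p (ℓ + m) + a * p ℓ := by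
      calc (1 - a) * p ℓ + a * p ℓ = ((1 - a) + a) * p ℓ := (add_mul _ _ _).symm
        _ = 1 * p ℓ := by rw [tsub_add_cancel_of_le ha1]
        _ = p ℓ := one_mul _
        _ ≤ a * p ℓ + p (ℓ + m) := hle
        _ = p (ℓ + m) + a * p ℓ := add_comm _ _
    exact (ENNReal.add_le_add_iff_right hfin).mp this
  -- iterated: (1-a)^k * p i ≤ p (i + k*m)
  have hpow : ∀ (i k : ℕ), (1 - a) ^ k * p i ≤ p (i + k * m) := by
    intro i k
    induction k with
    | zero => simp
    | succ k ih =>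
      calc (1 - a) ^ (k + 1) * p i = (1 - a) * ((1 - a) ^ k * p i) := by ring
        _ ≤ (1 - a) * p (i + k * m) := by
            exact mul_le_mul_right ih _
        _ ≤ p (i + k * m + m) := hstep _
        _ = p (i + (k + 1) * m) := by ring_nf
  -- lower bound for the tail integral
  rw [lintegral_nat_eq_tsum μ T hT]
  -- injective map (i, k) ↦ i + k * m from Fin m × ℕ
  have hinj : Function.Injective (fun x : Fin m × ℕ => (x.1 : ℕ) + x.2 * m) := by
    rintro ⟨i, k⟩ ⟨i', k'⟩ h
    simp only at h
    have hi : (i : ℕ) < m := i.isLt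
    have hi' : (i' : ℕ) < m := i'.isLt
    have h1 : ((i : ℕ) + k * m) % m = (i : ℕ) % m := Nat.add_mul_mod_self_right _ _ _
    have h2 : ((i' : ℕ) + k' * m) % m = (i' : ℕ) % m := Nat.add_mul_mod_self_right _ _ _
    have hii : (i : ℕ) = (i' : ℕ) := by
      rw [Nat.mod_eq_of_lt hi] at h1; rw [Nat.mod_eq_of_lt hi'] at h2
      rw [← h1, ← h2, h]
    have hk : k = k' := by
      rw [hii] at h
      have hmul : k * m = k' * m := Nat.add_left_cancel h
      exact Nat.eq_of_mul_eq_mul_right (by omega) hmul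
    exact Prod.ext (Fin.ext hii) hk
  have hsum1 : ∑' x : Fin m × ℕ, p ((x.1 : ℕ) + x.2 * m) ≤ ∑' n, p n :=
    tsum_comp_le_tsum_of_injective hinj p
  have hsum2 : ∀ i : Fin m, a⁻¹ * p (i : ℕ) ≤ ∑' k : ℕ, p ((i : ℕ) + k * m) := by
    intro i
    calc a⁻¹ * p (i : ℕ) = (∑' k : ℕ, (1 - a) ^ k) * p (i : ℕ) := by
          rw [ENNReal.tsum_geometric, ENNReal.sub_sub_cancel one_ne_top ha1]
      _ = ∑' k : ℕ, (1 - a) ^ k * p (i : ℕ) := by rw [ENNReal.tsum_mul_right]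
      _ ≤ ∑' k : ℕ, p ((i : ℕ) + k * m) := ENNReal.tsum_le_tsum fun k => hpow _ k
  have hmain : a⁻¹ * ∑ i : Fin m, p (i : ℕ) ≤ ∑' n, p n := by
    calc a⁻¹ * ∑ i : Fin m, p (i : ℕ) = ∑ i : Fin m, a⁻¹ * p (i : ℕ) := by
          rw [Finset.mul_sum]
      _ ≤ ∑ i : Fin m, ∑' k : ℕ, p ((i : ℕ) + k * m) := Finset.sum_le_sum fun i _ => hsum2 i
      _ = ∑' i : Fin m, ∑' k : ℕ, p ((i : ℕ) + k * m) := (tsum_fintype _).symm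
      _ = ∑' x : Fin m × ℕ, p ((x.1 : ℕ) + x.2 * m) := (ENNReal.tsum_prod).symm
      _ ≤ ∑' n, p n := hsum1
  -- lower bound the finite sum
  have hpi : ∀ i : ℕ, i ≤ m → (1 - a) ≤ p i := by
    intro i hi
    calc (1 - a) = (1 - a) * p 0 := by rw [hp0, mul_one]
      _ ≤ p (0 + m) := hstep 0
      _ = p m := by rw [Nat.zero_add]
      _ ≤ p i := hanti i m hi
  have hS : 1 + (m - 1 : ℕ) * (1 - a) ≤ ∑ i : Fin m, p (i : ℕ) := by
    rw [← Finset.sum_range (fun i => p i)]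
    obtain ⟨m', rfl⟩ : ∃ m', m = m' + 1 := ⟨m - 1, by omega⟩
    rw [Finset.sum_range_succ']
    simp only [Nat.add_sub_cancel]
    rw [hp0]
    have hb : (m' : ℝ≥0∞) * (1 - a) ≤ ∑ i ∈ Finset.range m', p (i + 1) := by
      calc (m' : ℝ≥0∞) * (1 - a) = ∑ _i ∈ Finset.range m', (1 - a) := by
            rw [Finset.sum_const, Finset.card_range, nsmul_eq_mul]
        _ ≤ ∑ i ∈ Finset.range m', p (i + 1) :=
            Finset.sum_le_sum fun i hi => hpi (i + 1) (by
              simp only [Finset.mem_range] at hi; omega)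
    calc (1 : ℝ≥0∞) + (m' : ℝ≥0∞) * (1 - a) = (m' : ℝ≥0∞) * (1 - a) + 1 := add_comm _ _
      _ ≤ (∑ i ∈ Finset.range m', p (i + 1)) + 1 := add_le_add_left hb 1
  have hfinal : a⁻¹ * (1 + (m - 1 : ℕ) * (1 - a)) ≤ ∑' n, p n :=
    le_trans (mul_le_mul_right hS a⁻¹) hmain
  refine le_trans ?_ hfinal
  -- now pure ENNReal/real arithmetic
  by_cases hG : 3 / 2 + (m / α) * (1 - 3 / 2 * α) ≤ 0
  · rw [ENNReal.ofReal_eq_zero.mpr hG]; exact zero_le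
  push_neg at hG
  have h1a : (1 : ℝ≥0∞) - a = ENNReal.ofReal (1 - α) := by
    rw [ENNReal.ofReal_sub _ hα0.le, ENNReal.ofReal_one]
  have hX : (1 : ℝ≥0∞) + (m - 1 : ℕ) * (1 - a) = ENNReal.ofReal (1 + (m - 1 : ℕ) * (1 - α)) := by
    rw [ENNReal.ofReal_add (by norm_num)
      (mul_nonneg (Nat.cast_nonneg _) (by linarith)), ENNReal.ofReal_one,
      ENNReal.ofReal_mul (by positivity), h1a, ENNReal.ofReal_natCast]
  rw [hX, ← ENNReal.div_eq_inv_mul, ENNReal.le_div_iff_mul_le (Or.inl ha0) (Or.inl hatop),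
    ha, ← ENNReal.ofReal_mul hG.le]
  apply ENNReal.ofReal_le_ofReal
  have hcast : ((m - 1 : ℕ) : ℝ) = (m : ℝ) - 1 := by
    have : (1 : ℕ) ≤ m := hm
    push_cast [this]; ring
  rw [hcast]
  have hm1 : (1 : ℝ) ≤ (m : ℝ) := by exact_mod_cast hm
  have key : (3 / 2 + (m / α) * (1 - 3 / 2 * α)) * α = (m : ℝ) - 3 / 2 * ((m : ℝ) - 1) * α := by
    field_simp; ring
  rw [key]
  nlinarith [mul_nonneg (sub_nonneg.mpr hm1) hα0.le]
end

section
/- If T satisfies the local false alarm constraint P(T \le \ell + m \mid T > \ell) \le \alpha for all \ell \ge 0, then \sum_{i=0}^{m-1} P(T > i) \ge (3/2)\alpha + (1 - (3/2)\alpha) m. -/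
open MeasureTheory ENNReal

theorem stmt_5 {Ω : Type*} [MeasurableSpace Ω] (μ : Measure Ω) [IsProbabilityMeasure μ]
    (T : Ω → ℕ) (hT : Measurable T) (hTpos : ∀ ω, 1 ≤ T ω) (m : ℕ) (hm : 1 ≤ m)
    (α : ℝ) (hα0 : 0 < α) (hα1 : α < 1)
    (hfa : ∀ ℓ : ℕ, μ {ω | T ω ≤ ℓ + m ∧ ℓ < T ω} ≤ ENNReal.ofReal α * μ {ω | ℓ < T ω}) :
    ENNReal.ofReal ((3 / 2) * α + (1 - (3 / 2) * α) * m) ≤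
      ∑ i ∈ Finset.range m, μ {ω | i < T ω} := by
  obtain ⟨n, rfl⟩ : ∃ n, m = n + 1 := ⟨m - 1, (Nat.succ_pred_eq_of_pos hm).symm⟩
  -- P(T > 0) = 1
  have h0set : {ω | 0 < T ω} = Set.univ := by
    ext ω; simp [Nat.lt_of_lt_of_le Nat.zero_lt_one (hTpos ω)]
  have h0 : μ {ω | 0 < T ω} = 1 := by rw [h0set]; simp
  -- P(T ≤ m) ≤ α
  have hkey : μ {ω | T ω ≤ n + 1} ≤ ENNReal.ofReal α := by
    have h := hfa 0
    rw [h0, mul_one] at h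
    have hset : {ω | T ω ≤ 0 + (n + 1) ∧ 0 < T ω} = {ω | T ω ≤ n + 1} := by
      ext ω
      simp [Nat.lt_of_lt_of_le Nat.zero_lt_one (hTpos ω)]
    rwa [hset] at h
  -- each tail term with i+1 is ≥ 1 - α
  have hterm : ∀ i : ℕ, i < n → ENNReal.ofReal (1 - α) ≤ μ {ω | i + 1 < T ω} := by
    intro i hi
    have hmeas : MeasurableSet {ω | T ω ≤ i + 1} := hT measurableSet_Iic
    have hcompl : {ω | i + 1 < T ω} = {ω | T ω ≤ i + 1}ᶜ := by
      ext ω; simp [not_le]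
    have hle : μ {ω | T ω ≤ i + 1} ≤ ENNReal.ofReal α := by
      refine le_trans (measure_mono ?_) hkey
      intro ω hω
      exact le_trans hω (Nat.succ_le_succ hi.le)
    rw [hcompl, prob_compl_eq_one_sub hmeas]
    calc ENNReal.ofReal (1 - α) = 1 - ENNReal.ofReal α := by
          rw [ENNReal.ofReal_sub _ (le_of_lt hα0), ENNReal.ofReal_one]
      _ ≤ 1 - μ {ω | T ω ≤ i + 1} := tsub_le_tsub_left hle 1
  -- lower bound the sum
  have hsum : (n : ℝ≥0∞) * ENNReal.ofReal (1 - α) + 1 ≤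
      ∑ i ∈ Finset.range (n + 1), μ {ω | i < T ω} := by
    rw [Finset.sum_range_succ']
    gcongr
    · calc (n : ℝ≥0∞) * ENNReal.ofReal (1 - α)
          = ∑ _i ∈ Finset.range n, ENNReal.ofReal (1 - α) := by
            simp [Finset.sum_const, nsmul_eq_mul]
        _ ≤ ∑ i ∈ Finset.range n, μ {ω | i + 1 < T ω} := by
            refine Finset.sum_le_sum fun i hi => hterm i (Finset.mem_range.mp hi)
    · rw [h0]
  refine le_trans ?_ hsum
  have heq : (n : ℝ≥0∞) * ENNReal.ofReal (1 - α) + 1 =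
      ENNReal.ofReal (n * (1 - α) + 1) := by
    rw [ENNReal.ofReal_add (mul_nonneg (Nat.cast_nonneg n) (by linarith)) zero_le_one, ENNReal.ofReal_one,
      ENNReal.ofReal_mul (by positivity), ENNReal.ofReal_natCast]
  rw [heq]
  apply ENNReal.ofReal_le_ofReal
  push_cast
  nlinarith [hα0.le, (Nat.cast_nonneg n : (0:ℝ) ≤ n)]
end
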